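/- Let K be a finite group, M a finite transitive K-set, and H = ℂ^{M×M} ⊗ ℂ[K] the weak Hopf algebra with structure maps as above and antipode S(δ_m ⊗ δ_n ⊗ k) = δ_{k⁻¹▷n} ⊗ δ_{k⁻¹▷m} ⊗ k⁻¹. Then S is an algebra anti-homomorphism, an involution (S ∘ S = id), and satisfies the weak antipode axioms: m∘(id ⊗ S)∘Δ(h) = (ε ⊗ id)(Δ(1)·(h ⊗ 1)), m∘(S ⊗ id)∘Δ(h) = (id ⊗ ε)((1 ⊗ h)·Δ(1)), and S(h) = S(h_(1)) h_(2) S(h_(3)) for all h ∈ H. -/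

import Mathlib

namespace Stmt14

variable {K M : Type} [Group K] [Fintype K] [Fintype M] [MulAction K M]
  [DecidableEq M] [DecidableEq K]

/-- The basis element `δ_x` of `ℂ^{M×M} ⊗ ℂ[K]` (function model). -/
def deltaP (x : M × M × K) : M × M × K → ℂ :=
  fun t => if t = x then 1 else 0

/-- The multiplication of `ℂ^{M×M} ⋊ ℂ[K]`. -/
noncomputable def wmul (f g : M × M × K → ℂ) : M × M × K → ℂ :=
  fun t => ∑ h : K, f (t.1, t.2.1, h) * g (h⁻¹ • t.1, h⁻¹ • t.2.1, h⁻¹ * t.2.2)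

/-- The unit `1 = ∑_{m,n} δ_m ⊗ δ_n ⊗ e`. -/
def wone : M × M × K → ℂ :=
  fun t => if t.2.2 = 1 then 1 else 0

/-- The comultiplication of `ℂ^{M×M} ⋊ ℂ[K]` (function model of `H ⊗ H`). -/
def comul (f : M × M × K → ℂ) : M × M × K → M × M × K → ℂ :=
  fun x y => if x.2.2 = y.2.2 ∧ x.2.1 = y.1 then f (x.1, y.2.1, x.2.2) else 0

/-- The counit `ε(δ_m ⊗ δ_n ⊗ k) = δ_m(n)`. -/
noncomputable def counit (f : M × M × K → ℂ) : ℂ :=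
  ∑ m : M, ∑ k : K, f (m, m, k)

/-- The componentwise multiplication of `H ⊗ H` in the function model. -/
noncomputable def t2mul (u v : M × M × K → M × M × K → ℂ) :
    M × M × K → M × M × K → ℂ :=
  fun x y => ∑ h : K, ∑ h' : K,
    u (x.1, x.2.1, h) (y.1, y.2.1, h') *
      v (h⁻¹ • x.1, h⁻¹ • x.2.1, h⁻¹ * x.2.2) (h'⁻¹ • y.1, h'⁻¹ • y.2.1, h'⁻¹ * y.2.2)

/-- The antipode `S(δ_m ⊗ δ_n ⊗ k) = δ_{k⁻¹▷n} ⊗ δ_{k⁻¹▷m} ⊗ k⁻¹`. -/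
def wS (f : M × M × K → ℂ) : M × M × K → ℂ :=
  fun t => f (t.2.2⁻¹ • t.2.1, t.2.2⁻¹ • t.1, t.2.2⁻¹)

set_option linter.unusedSectionVars false

lemma part1 (f g : M × M × K → ℂ) : wS (wmul f g) = wmul (wS g) (wS f) := by
  funext t
  obtain ⟨m, n, k⟩ := t
  simp only [wS, wmul]
  rw [← Equiv.sum_comp (Equiv.mulLeft k⁻¹)]
  refine Finset.sum_congr rfl fun h _ => ?_
  simp [mul_smul, mul_assoc, mul_comm, smul_smul]

lemma part2 (f : M × M × K → ℂ) : wS (wS f) = f := by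
  funext t
  obtain ⟨m, n, k⟩ := t
  simp [wS, smul_smul]

lemma part3 (f : M × M × K → ℂ) (t : M × M × K) :
    (∑ x : M × M × K, ∑ y : M × M × K,
        comul f x y * wmul (deltaP x) (wS (deltaP y)) t)
      = ∑ m : M, ∑ k : K,
          t2mul (comul (wone (M := M) (K := K)))
            (fun a b => f a * wone b) (m, m, k) t := by
  obtain ⟨m, n, k⟩ := t
  simp only [comul, wmul, wS, deltaP, wone, t2mul, Finset.mul_sum, mul_ite, ite_mul,
    one_mul, mul_one, zero_mul, mul_zero, inv_mul_eq_one, mul_inv_rev, inv_inv,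
    Finset.sum_ite_eq, Finset.sum_ite_eq', Finset.mem_univ, if_true, ite_and,
    Finset.sum_ite_irrel, Finset.sum_const_zero]
  refine Eq.trans (Finset.sum_congr rfl fun x _ => Finset.sum_comm) ?_
  simp only [Finset.mul_sum, mul_ite, ite_mul,
    one_mul, mul_one, zero_mul, mul_zero, inv_mul_eq_one, mul_inv_rev, inv_inv,
    Finset.sum_ite_eq, Finset.sum_ite_eq', Finset.mem_univ, if_true, ite_and,
    Finset.sum_ite_irrel, Finset.sum_const_zero]
  rw [Finset.sum_comm]
  by_cases hk : k = 1 <;>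
    simp [hk, smul_smul, right_eq_mul]

lemma part4 (f : M × M × K → ℂ) (t : M × M × K) :
    (∑ x : M × M × K, ∑ y : M × M × K,
        comul f x y * wmul (wS (deltaP x)) (deltaP y) t)
      = ∑ m : M, ∑ k : K,
          t2mul (fun a b => wone a * f b)
            (comul (wone (M := M) (K := K))) t (m, m, k) := by
  obtain ⟨m, n, k⟩ := t
  simp only [comul, wmul, wS, deltaP, wone, t2mul, Finset.mul_sum, mul_ite, ite_mul,
    one_mul, mul_one, zero_mul, mul_zero, inv_mul_eq_one, mul_inv_rev, inv_inv,
    Finset.sum_ite_eq, Finset.sum_ite_eq', Finset.mem_univ, if_true, ite_and,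
    Finset.sum_ite_irrel, Finset.sum_const_zero]
  refine Eq.trans (Finset.sum_congr rfl fun x _ => Finset.sum_comm) ?_
  simp only [Finset.mul_sum, mul_ite, ite_mul,
    one_mul, mul_one, zero_mul, mul_zero, inv_mul_eq_one, mul_inv_rev, inv_inv,
    Finset.sum_ite_eq, Finset.sum_ite_eq', Finset.mem_univ, if_true, ite_and,
    Finset.sum_ite_irrel, Finset.sum_const_zero]
  rw [Finset.sum_comm]
  have sw : ∀ g : M → K → K → K → ℂ, (∑ x : M, ∑ a : K, ∑ b : K, ∑ c : K, g x a b c)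
      = ∑ b : K, ∑ c : K, ∑ x : M, ∑ a : K, g x a b c := by
    intro g
    calc (∑ x : M, ∑ a : K, ∑ b : K, ∑ c : K, g x a b c)
        = ∑ x : M, ∑ b : K, ∑ c : K, ∑ a : K, g x a b c := Finset.sum_congr rfl fun x _ => by
          rw [Finset.sum_comm]; exact Finset.sum_congr rfl fun b _ => Finset.sum_comm
      _ = ∑ b : K, ∑ x : M, ∑ c : K, ∑ a : K, g x a b c := Finset.sum_comm
      _ = ∑ b : K, ∑ c : K, ∑ x : M, ∑ a : K, g x a b c :=
          Finset.sum_congr rfl fun b _ => Finset.sum_comm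
  conv_rhs => rw [sw]
  simp only [eq_inv_mul_iff_mul_eq, eq_inv_smul_iff, Finset.sum_ite_eq, Finset.sum_ite_eq',
    Finset.mem_univ, if_true, ite_and, Finset.sum_ite_irrel, Finset.sum_const_zero]
  by_cases hk : k = 1
  · simp only [hk, mul_one, if_true, right_eq_mul, inv_eq_one, smul_inv_smul,
      mul_inv_cancel, inv_one, one_smul]
    rw [← Equiv.sum_comp (Equiv.inv K) (fun x => f (x⁻¹ • n, x⁻¹ • n, x⁻¹))]
    simp [smul_smul]
  · simp [hk, Ne.symm hk]

lemma part5 (f : M × M × K → ℂ) (t : M × M × K) :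
    wS f t
      = ∑ x : M × M × K, ∑ y : M × M × K, ∑ z : M × M × K,
          comul (fun w => comul f w z) x y *
            wmul (wmul (wS (deltaP x)) (deltaP y)) (wS (deltaP z)) t := by
  obtain ⟨m, n, k⟩ := t
  symm
  simp only [comul, wmul, wS, deltaP, wone, t2mul, Finset.mul_sum, mul_ite, ite_mul,
    one_mul, mul_one, zero_mul, mul_zero, inv_mul_eq_one, mul_inv_rev, inv_inv,
    Finset.sum_ite_eq, Finset.sum_ite_eq', Finset.mem_univ, if_true, ite_and,
    Finset.sum_ite_irrel, Finset.sum_const_zero]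
  have pull : ∀ (c : Prop) [Decidable c] (g : K → ℂ),
      (if c then ∑ x : K, g x else 0) = ∑ x : K, if c then g x else 0 := by
    intro c _ g; split <;> simp
  simp only [pull]
  have sw5 : ∀ g : (M × M × K) → (M × M × K) → (M × M × K) → K → K → ℂ,
      (∑ x : M × M × K, ∑ y : M × M × K, ∑ z : M × M × K, ∑ a : K, ∑ b : K, g x y z a b)
        = ∑ a : K, ∑ b : K, ∑ x : M × M × K, ∑ y : M × M × K, ∑ z : M × M × K, g x y z a b := by
    intro g
    calc (∑ x : M × M × K, ∑ y : M × M × K, ∑ z : M × M × K, ∑ a : K, ∑ b : K, g x y z a b)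
        = ∑ x : M × M × K, ∑ y : M × M × K, ∑ a : K, ∑ z : M × M × K, ∑ b : K, g x y z a b :=
          Finset.sum_congr rfl fun x _ => Finset.sum_congr rfl fun y _ => Finset.sum_comm
      _ = ∑ x : M × M × K, ∑ a : K, ∑ y : M × M × K, ∑ z : M × M × K, ∑ b : K, g x y z a b :=
          Finset.sum_congr rfl fun x _ => Finset.sum_comm
      _ = ∑ a : K, ∑ x : M × M × K, ∑ y : M × M × K, ∑ z : M × M × K, ∑ b : K, g x y z a b :=
          Finset.sum_comm
      _ = ∑ a : K, ∑ x : M × M × K, ∑ y : M × M × K, ∑ b : K, ∑ z : M × M × K, g x y z a b :=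
          Finset.sum_congr rfl fun a _ => Finset.sum_congr rfl fun x _ =>
            Finset.sum_congr rfl fun y _ => Finset.sum_comm
      _ = ∑ a : K, ∑ x : M × M × K, ∑ b : K, ∑ y : M × M × K, ∑ z : M × M × K, g x y z a b :=
          Finset.sum_congr rfl fun a _ => Finset.sum_congr rfl fun x _ => Finset.sum_comm
      _ = ∑ a : K, ∑ b : K, ∑ x : M × M × K, ∑ y : M × M × K, ∑ z : M × M × K, g x y z a b :=
          Finset.sum_congr rfl fun a _ => Finset.sum_comm
  rw [sw5]
  simp only [Finset.sum_ite_eq, Finset.sum_ite_eq', Finset.mem_univ, if_true, ite_and,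
    Finset.sum_ite_irrel, Finset.sum_const_zero, left_eq_mul, inv_inj, smul_smul,
    mul_one, one_smul, inv_one]

/-- the antipode of `ℂ^{M×M} ⋊ ℂ[K]` is an algebra
anti-homomorphism, an involution (`S ∘ S = id`), and satisfies the weak antipode
axioms `m∘(id⊗S)∘Δ(h) = (ε⊗id)(Δ(1)·(h⊗1))`, `m∘(S⊗id)∘Δ(h) = (id⊗ε)((1⊗h)·Δ(1))`
and `S(h) = ∑ S(h₍₁₎) h₍₂₎ S(h₍₃₎)`. -/

theorem stmt14 (htrans : MulAction.IsPretransitive K M) :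
    (∀ f g : M × M × K → ℂ, wS (wmul f g) = wmul (wS g) (wS f)) ∧
    (∀ f : M × M × K → ℂ, wS (wS f) = f) ∧
    (∀ (f : M × M × K → ℂ) (t : M × M × K),
      (∑ x : M × M × K, ∑ y : M × M × K,
          comul f x y * wmul (deltaP x) (wS (deltaP y)) t)
        = ∑ m : M, ∑ k : K,
            t2mul (comul (wone (M := M) (K := K)))
              (fun a b => f a * wone b) (m, m, k) t) ∧
    (∀ (f : M × M × K → ℂ) (t : M × M × K),
      (∑ x : M × M × K, ∑ y : M × M × K,
          comul f x y * wmul (wS (deltaP x)) (deltaP y) t)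
        = ∑ m : M, ∑ k : K,
            t2mul (fun a b => wone a * f b)
              (comul (wone (M := M) (K := K))) t (m, m, k)) ∧
    (∀ (f : M × M × K → ℂ) (t : M × M × K),
      wS f t
        = ∑ x : M × M × K, ∑ y : M × M × K, ∑ z : M × M × K,
            comul (fun w => comul f w z) x y *
              wmul (wmul (wS (deltaP x)) (deltaP y)) (wS (deltaP z)) t) := by
  exact ⟨part1, part2, part3, part4, part5⟩

end Stmt14
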